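/- The map [x1:...:x5] ↦ [y1:...:y6] = [x1 : x2 : x3 : x4 : x5 : (x3*x4 + e1*x4*x5 + e2*x5^2)/x5] sends the cubic X = {x3*x4^2 + (x1*x2+x3^2)*x5 + e1*x4^2*x5 + e2*x4*x5^2 + e3*x5^3 = 0} (on the locus x5 ≠ 0) into the complete intersection of two quadrics X_{2,2} ⊂ P^5 defined by y3*y4 + e1*y4*y5 + e2*y5^2 - y5*y6 = 0 and y1*y2 + y3^2 + e3*y5^2 + y4*y6 = 0. -/

import Mathlib

/-- The unprojection map `[x1:...:x5] ↦ [x1 : x2 : x3 : x4 : x5 : y6]` with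
`y6 = (x3*x4 + e1*x4*x5 + e2*x5^2)/x5` sends the cubic
`X = {x3*x4^2 + (x1*x2+x3^2)*x5 + e1*x4^2*x5 + e2*x4*x5^2 + e3*x5^3 = 0}` (where `x5 ≠ 0`)
into the complete intersection of two quadrics
`y3*y4 + e1*y4*y5 + e2*y5^2 - y5*y6 = 0` and `y1*y2 + y3^2 + e3*y5^2 + y4*y6 = 0`. -/
theorem unprojection_into_quadric_intersection (k : Type*) [Field k] (e1 e2 e3 : k)
    (x1 x2 x3 x4 x5 : k) (hx5 : x5 ≠ 0)
    (hX : x3 * x4^2 + (x1 * x2 + x3^2) * x5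
      + e1 * x4^2 * x5 + e2 * x4 * x5^2 + e3 * x5^3 = 0) :
    x3 * x4 + e1 * x4 * x5 + e2 * x5^2
        - x5 * ((x3 * x4 + e1 * x4 * x5 + e2 * x5^2) / x5) = 0 ∧
    x1 * x2 + x3^2 + e3 * x5^2
        + x4 * ((x3 * x4 + e1 * x4 * x5 + e2 * x5^2) / x5) = 0 := by
  constructor
  · field_simp
    ring
  · field_simp
    linear_combination hX
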